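/- If γ > 0 and the constants c = 1/2 + π/(4γ) and A satisfy A² = 2c(1 − 1/γ − c), then the function x(t) = c + A sin(πt/2) satisfies the renewal equation x(t) = (γ/2) ∫_{t−3}^{t−1} x(s)(1 − x(s)) ds for all real t. -/

import Mathlib

open Real intervalIntegral

/-- If `γ > 0`, `c = 1/2 + π/(4γ)` and `A² = 2c(1 − 1/γ − c)`, then
`x(t) = c + A sin(πt/2)` satisfies the renewal equation
`x(t) = (γ/2) ∫_{t−3}^{t−1} x(s)(1 − x(s)) ds` for all real `t`. -/
theorem stmt_1 (γ c A : ℝ) (hγ : 0 < γ)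
    (hc : c = 1 / 2 + Real.pi / (4 * γ))
    (hA : A ^ 2 = 2 * c * (1 - 1 / γ - c))
    (x : ℝ → ℝ) (hx : ∀ t, x t = c + A * Real.sin (Real.pi * t / 2)) :
    ∀ t : ℝ, x t = (γ / 2) * ∫ s in (t - 3)..(t - 1), x s * (1 - x s) := by
  intro t
  have hπ : Real.pi ≠ 0 := Real.pi_ne_zero
  have hγ' : γ ≠ 0 := ne_of_gt hγ
  set F : ℝ → ℝ := fun s => (c*(1-c) - A^2/2)*s
      - (2*A*(1-2*c)/Real.pi)*Real.cos (Real.pi*s/2)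
      + (A^2/(2*Real.pi))*Real.sin (Real.pi*s) with hF
  have hxc : Continuous x := by
    rw [show x = fun t => c + A * Real.sin (Real.pi*t/2) from funext hx]
    continuity
  have hder : ∀ s : ℝ, HasDerivAt F (x s * (1 - x s)) s := by
    intro s
    have h1 : HasDerivAt (fun s : ℝ => Real.pi*s/2) (Real.pi/2) s := by
      simpa using ((hasDerivAt_id s).const_mul Real.pi).div_const 2
    have h2 : HasDerivAt (fun s : ℝ => Real.pi*s) Real.pi s := by
      simpa using (hasDerivAt_id s).const_mul Real.pi
    have hcos : HasDerivAt (fun s : ℝ => Real.cos (Real.pi*s/2))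
        (-Real.sin (Real.pi*s/2) * (Real.pi/2)) s := (Real.hasDerivAt_cos _).comp s h1
    have hsin : HasDerivAt (fun s : ℝ => Real.sin (Real.pi*s))
        (Real.cos (Real.pi*s) * Real.pi) s := (Real.hasDerivAt_sin _).comp s h2
    have hall := (((hasDerivAt_id s).const_mul (c*(1-c) - A^2/2)).sub
        (hcos.const_mul (2*A*(1-2*c)/Real.pi))).add
        (hsin.const_mul (A^2/(2*Real.pi)))
    convert hall using 1
    case e'_4 => rfl
    case e'_5 => rfl
    case e'_8 => rfl
    rw [hx s]
    have hpyth : Real.cos (Real.pi*s) = 1 - 2 * Real.sin (Real.pi*s/2)^2 := by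
      have h := Real.cos_two_mul (Real.pi*s/2)
      rw [show 2*(Real.pi*s/2) = Real.pi*s by ring] at h
      nlinarith [Real.sin_sq_add_cos_sq (Real.pi*s/2)]
    rw [hpyth]
    field_simp
    ring
  have hint : IntervalIntegrable (fun s => x s * (1 - x s))
      MeasureTheory.volume (t-3) (t-1) :=
    (hxc.mul (continuous_const.sub hxc)).intervalIntegrable _ _
  rw [intervalIntegral.integral_eq_sub_of_hasDerivAt (fun s _ => hder s) hint]
  have e1 : Real.cos (Real.pi*(t-1)/2) = Real.sin (Real.pi*t/2) := by
    rw [show Real.pi*(t-1)/2 = Real.pi*t/2 - Real.pi/2 by ring, Real.cos_sub]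
    simp
  have e2 : Real.cos (Real.pi*(t-3)/2) = -Real.sin (Real.pi*t/2) := by
    rw [show Real.pi*(t-3)/2 = (Real.pi*t/2 - Real.pi/2) - Real.pi by ring,
      Real.cos_sub, Real.cos_sub]
    simp
  have e3 : Real.sin (Real.pi*(t-1)) = -Real.sin (Real.pi*t) := by
    rw [show Real.pi*(t-1) = Real.pi*t - Real.pi by ring, Real.sin_sub]
    simp
  have e4 : Real.sin (Real.pi*(t-3)) = -Real.sin (Real.pi*t) := by
    rw [show Real.pi*(t-3) = (Real.pi*t - Real.pi) - 2*Real.pi by ring,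
      Real.sin_sub_two_pi, Real.sin_sub]
    simp
  rw [hF]
  simp only [e1, e2, e3, e4]
  rw [hx t, hA]
  subst hc
  field_simp
  ring
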